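/- The rewrite relation → (edge-domination and node-domination) is confluent up to isomorphism: if H →* H₁ and H →* H₂, then there exist hypergraphs H₃ and H₄ with H₁ →* H₃, H₂ →* H₄, and H₃ isomorphic to H₄. -/

import Mathlib

/-- A hypergraph: finite node set, finite edge set, incidence relation. -/
structure HG where
  V : Finset ℕ
  E : Finset ℕ
  I : Finset (ℕ × ℕ)

/-- Nodes incident to edge `e`. -/
def HG.Ve (H : HG) (e : ℕ) : Finset ℕ := H.V.filter (fun v => (v, e) ∈ H.I)

/-- Edges incident to node `v`. -/
def HG.Ev (H : HG) (v : ℕ) : Finset ℕ := H.E.filter (fun e => (v, e) ∈ H.I)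

/-- Remove edge `e'` (and its incidences). -/
def HG.removeEdge (H : HG) (e' : ℕ) : HG :=
  ⟨H.V, H.E.erase e', H.I.filter (fun p => p.2 ≠ e')⟩

/-- Remove node `v` (and its incidences). -/
def HG.removeNode (H : HG) (v : ℕ) : HG :=
  ⟨H.V.erase v, H.E, H.I.filter (fun p => p.1 ≠ v)⟩

/-- Edge-domination step: remove a dominating edge `e'`. -/
def EdgeStep (H H' : HG) : Prop :=
  ∃ e e', e ∈ H.E ∧ e' ∈ H.E ∧ e ≠ e' ∧ H.Ve e ⊆ H.Ve e' ∧ H' = H.removeEdge e'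

/-- Node-domination step: remove a dominated node `v`. -/
def NodeStep (H H' : HG) : Prop :=
  ∃ v v', v ∈ H.V ∧ v' ∈ H.V ∧ v ≠ v' ∧ H.Ev v ⊆ H.Ev v' ∧ H' = H.removeNode v

/-- One application of either rewrite rule. -/
def Step (H H' : HG) : Prop := EdgeStep H H' ∨ NodeStep H H'

/-- Hypergraph isomorphism. -/
def Iso (H H' : HG) : Prop :=
  ∃ f : {x // x ∈ H'.V} ≃ {x // x ∈ H.V}, ∃ g : {x // x ∈ H'.E} ≃ {x // x ∈ H.E},
    ∀ (v : {x // x ∈ H'.V}) (e : {x // x ∈ H'.E}),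
      ((v : ℕ), (e : ℕ)) ∈ H'.I ↔ ((f v : ℕ), (g e : ℕ)) ∈ H.I

/-- One rewrite step between isomorphism classes, via representatives. -/
def StepIso (H K : HG) : Prop := ∃ H' K', Iso H H' ∧ Iso K K' ∧ Step H' K'

-- ## Auxiliary development


lemma HG.ext' {H K : HG} (hV : H.V = K.V) (hE : H.E = K.E) (hI : H.I = K.I) : H = K := by
  cases H; cases K; simp_all

lemma mem_Ve {H : HG} {v e : ℕ} : v ∈ H.Ve e ↔ v ∈ H.V ∧ (v, e) ∈ H.I := by
  simp [HG.Ve]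

lemma mem_Ev {H : HG} {v e : ℕ} : e ∈ H.Ev v ↔ e ∈ H.E ∧ (v, e) ∈ H.I := by
  simp [HG.Ev]

lemma iso_refl (H : HG) : Iso H H := ⟨Equiv.refl _, Equiv.refl _, fun _ _ => Iff.rfl⟩

lemma iso_symm {H K : HG} (h : Iso H K) : Iso K H := by
  obtain ⟨f, g, hfg⟩ := h
  refine ⟨f.symm, g.symm, fun v e => ?_⟩
  simpa using (hfg (f.symm v) (g.symm e)).symm

lemma iso_trans {H K L : HG} (h1 : Iso H K) (h2 : Iso K L) : Iso H L := by
  obtain ⟨f1, g1, h1⟩ := h1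
  obtain ⟨f2, g2, h2⟩ := h2
  exact ⟨f2.trans f1, g2.trans g1, fun v e => (h2 v e).trans (h1 (f2 v) (g2 e))⟩

-- ## Computation lemmas

lemma Ve_removeEdge {H : HG} {e e' : ℕ} (h : e ≠ e') : (H.removeEdge e').Ve e = H.Ve e := by
  ext v; simp [HG.Ve, HG.removeEdge, h]

lemma Ev_removeEdge {H : HG} {v e' : ℕ} : (H.removeEdge e').Ev v = (H.Ev v).erase e' := by
  ext e; simp [HG.Ev, HG.removeEdge, Finset.mem_erase]; tauto

lemma Ev_removeNode {H : HG} {v w : ℕ} (h : w ≠ v) : (H.removeNode v).Ev w = H.Ev w := by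
  ext e; simp [HG.Ev, HG.removeNode, h]

lemma Ve_removeNode {H : HG} {v e : ℕ} : (H.removeNode v).Ve e = (H.Ve e).erase v := by
  ext w; simp [HG.Ve, HG.removeNode, Finset.mem_erase]; tauto

lemma removeEdge_comm (H : HG) (a b : ℕ) :
    (H.removeEdge a).removeEdge b = (H.removeEdge b).removeEdge a := by
  apply HG.ext'
  · rfl
  · simp [HG.removeEdge, Finset.erase_right_comm]
  · simp [HG.removeEdge, Finset.filter_filter]
    congr 1; ext p; tauto

lemma removeNode_comm (H : HG) (a b : ℕ) :
    (H.removeNode a).removeNode b = (H.removeNode b).removeNode a := by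
  apply HG.ext'
  · simp [HG.removeNode, Finset.erase_right_comm]
  · rfl
  · simp [HG.removeNode, Finset.filter_filter]
    congr 1; ext p; tauto

lemma removeEdge_removeNode (H : HG) (e v : ℕ) :
    (H.removeEdge e).removeNode v = (H.removeNode v).removeEdge e := by
  apply HG.ext'
  · rfl
  · rfl
  · simp [HG.removeNode, HG.removeEdge, Finset.filter_filter]
    congr 1; ext p; tauto

-- ## Equiv on erased sets

def eraseEquiv {s t : Finset ℕ} (g : {x // x ∈ s} ≃ {x // x ∈ t}) {a : ℕ} (ha : a ∈ s) :
    {x // x ∈ s.erase a} ≃ {x // x ∈ t.erase ((g ⟨a, ha⟩ : ℕ))} where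
  toFun x := ⟨(g ⟨(x : ℕ), Finset.mem_of_mem_erase x.2⟩ : ℕ), by
    rw [Finset.mem_erase]
    refine ⟨fun hc => (Finset.mem_erase.mp x.2).1 ?_, (g ⟨(x : ℕ), _⟩).2⟩
    exact congrArg Subtype.val (g.injective (Subtype.ext hc))⟩
  invFun y := ⟨(g.symm ⟨(y : ℕ), Finset.mem_of_mem_erase y.2⟩ : ℕ), by
    rw [Finset.mem_erase]
    refine ⟨fun hc => (Finset.mem_erase.mp y.2).1 ?_, (g.symm ⟨(y : ℕ), _⟩).2⟩
    have h2 : (⟨(y : ℕ), Finset.mem_of_mem_erase y.2⟩ : {x // x ∈ t}) = g ⟨a, ha⟩ := by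
      have := congrArg g (Subtype.ext hc :
        g.symm ⟨(y : ℕ), Finset.mem_of_mem_erase y.2⟩ = ⟨a, ha⟩)
      simpa using this
    exact congrArg Subtype.val h2⟩
  left_inv x := by
    apply Subtype.ext
    simp
  right_inv y := by
    apply Subtype.ext
    simp

@[simp] lemma eraseEquiv_coe {s t : Finset ℕ} (g : {x // x ∈ s} ≃ {x // x ∈ t}) {a : ℕ}
    (ha : a ∈ s) (x : {x // x ∈ s.erase a}) :
    (eraseEquiv g ha x : ℕ) = (g ⟨(x : ℕ), Finset.mem_of_mem_erase x.2⟩ : ℕ) := rfl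

-- ## Transport of a step along an isomorphism

lemma step_iso {H H' K' : HG} (hiso : Iso H H') (hs : Step H' K') :
    ∃ K : HG, Step H K ∧ Iso K K' := by
  obtain ⟨f, g, hfg⟩ := hiso
  rcases hs with ⟨e, e', he, he', hne, hsub, rfl⟩ | ⟨v, v', hv, hv', hne, hsub, rfl⟩
  · -- edge step
    set a : ℕ := (g ⟨e, he⟩ : ℕ) with ha_def
    set b : ℕ := (g ⟨e', he'⟩ : ℕ) with hb_def
    have hab : a ≠ b := fun hc => hne (congrArg Subtype.val (g.injective (Subtype.ext hc)))
    have hVsub : H.Ve a ⊆ H.Ve b := by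
      intro x hx
      rw [mem_Ve] at hx ⊢
      obtain ⟨hxV, hxI⟩ := hx
      set w := f.symm ⟨x, hxV⟩ with hw
      have h1 : ((w : ℕ), e) ∈ H'.I := by
        rw [hfg w ⟨e, he⟩]
        simpa [hw] using hxI
      have h2 : (w : ℕ) ∈ H'.Ve e' := hsub (mem_Ve.mpr ⟨w.2, h1⟩)
      have h3 := (hfg w ⟨e', he'⟩).mp (mem_Ve.mp h2).2
      refine ⟨hxV, ?_⟩
      simpa [hw] using h3
    refine ⟨H.removeEdge b, Or.inl ⟨a, b, (g ⟨e, he⟩).2, (g ⟨e', he'⟩).2, hab, hVsub, rfl⟩, ?_⟩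
    refine ⟨f, eraseEquiv g he', ?_⟩
    rintro ⟨x, hx⟩ ⟨y, hy⟩
    have hyE : y ∈ H'.E := Finset.mem_of_mem_erase hy
    have hyne : y ≠ e' := (Finset.mem_erase.mp hy).1
    have hgne : (g ⟨y, hyE⟩ : ℕ) ≠ b :=
      fun hc => hyne (congrArg Subtype.val (g.injective (Subtype.ext hc)))
    simp only [HG.removeEdge, Finset.mem_filter, eraseEquiv_coe]
    constructor
    · rintro ⟨h1, -⟩
      exact ⟨(hfg ⟨x, hx⟩ ⟨y, hyE⟩).mp h1, hgne⟩
    · rintro ⟨h1, -⟩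
      exact ⟨(hfg ⟨x, hx⟩ ⟨y, hyE⟩).mpr h1, hyne⟩
  · -- node step
    set a : ℕ := (f ⟨v, hv⟩ : ℕ) with ha_def
    set b : ℕ := (f ⟨v', hv'⟩ : ℕ) with hb_def
    have hab : a ≠ b := fun hc => hne (congrArg Subtype.val (f.injective (Subtype.ext hc)))
    have hEsub : H.Ev a ⊆ H.Ev b := by
      intro x hx
      rw [mem_Ev] at hx ⊢
      obtain ⟨hxE, hxI⟩ := hx
      set w := g.symm ⟨x, hxE⟩ with hw
      have h1 : (v, (w : ℕ)) ∈ H'.I := by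
        rw [hfg ⟨v, hv⟩ w]
        simpa [hw] using hxI
      have h2 : (w : ℕ) ∈ H'.Ev v' := hsub (mem_Ev.mpr ⟨w.2, h1⟩)
      have h3 := (hfg ⟨v', hv'⟩ w).mp (mem_Ev.mp h2).2
      refine ⟨hxE, ?_⟩
      simpa [hw] using h3
    refine ⟨H.removeNode a, Or.inr ⟨a, b, (f ⟨v, hv⟩).2, (f ⟨v', hv'⟩).2, hab, hEsub, rfl⟩, ?_⟩
    refine ⟨eraseEquiv f hv, g, ?_⟩
    rintro ⟨x, hx⟩ ⟨y, hy⟩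
    have hxV : x ∈ H'.V := Finset.mem_of_mem_erase hx
    have hxne : x ≠ v := (Finset.mem_erase.mp hx).1
    have hfne : (f ⟨x, hxV⟩ : ℕ) ≠ a :=
      fun hc => hxne (congrArg Subtype.val (f.injective (Subtype.ext hc)))
    simp only [HG.removeNode, Finset.mem_filter, eraseEquiv_coe]
    constructor
    · rintro ⟨h1, -⟩
      exact ⟨(hfg ⟨x, hxV⟩ ⟨y, hy⟩).mp h1, hfne⟩
    · rintro ⟨h1, -⟩
      exact ⟨(hfg ⟨x, hxV⟩ ⟨y, hy⟩).mpr h1, hxne⟩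

-- ## Swap isomorphisms (mutual domination)

lemma swap_edge_iso {H : HG} {a b : ℕ} (ha : a ∈ H.E) (hb : b ∈ H.E) (hab : a ≠ b)
    (hVe : H.Ve a = H.Ve b) : Iso (H.removeEdge a) (H.removeEdge b) := by
  have hmem : ∀ x, x ∈ H.E.erase b ↔ Equiv.swap a b x ∈ H.E.erase a := by
    intro x
    rcases eq_or_ne x a with rfl | hxa
    · simp [Equiv.swap_apply_left, Finset.mem_erase, hab, hab.symm, ha, hb]
    rcases eq_or_ne x b with rfl | hxb
    · simp [Equiv.swap_apply_right, Finset.mem_erase, hab, hab.symm, ha, hb]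
    · rw [Equiv.swap_apply_of_ne_of_ne hxa hxb]; simp [Finset.mem_erase, hxa, hxb]
  have hIve : ∀ w, w ∈ H.V → ((w, a) ∈ H.I ↔ (w, b) ∈ H.I) := by
    intro w hw
    constructor <;> intro h
    · have h2 : w ∈ H.Ve b := hVe ▸ mem_Ve.mpr ⟨hw, h⟩
      exact (mem_Ve.mp h2).2
    · have h2 : w ∈ H.Ve a := hVe ▸ mem_Ve.mpr ⟨hw, h⟩
      exact (mem_Ve.mp h2).2
  refine ⟨Equiv.refl _, (Equiv.swap a b).subtypeEquiv hmem, ?_⟩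
  rintro ⟨v, hv⟩ ⟨e, he⟩
  have hv' : v ∈ H.V := hv
  have heb : e ≠ b := (Finset.mem_erase.mp he).1
  change ((v, e) ∈ (H.removeEdge b).I ↔ (v, Equiv.swap a b e) ∈ (H.removeEdge a).I)
  simp only [HG.removeEdge, Finset.mem_filter]
  rcases eq_or_ne e a with rfl | hxa
  · rw [Equiv.swap_apply_left]
    simp only [ne_eq, hab.symm, not_false_iff, and_true, heb]
    simpa using hIve v hv'
  · rw [Equiv.swap_apply_of_ne_of_ne hxa heb]
    simp [hxa, heb]

lemma swap_node_iso {H : HG} {a b : ℕ} (ha : a ∈ H.V) (hb : b ∈ H.V) (hab : a ≠ b)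
    (hEv : H.Ev a = H.Ev b) : Iso (H.removeNode a) (H.removeNode b) := by
  have hmem : ∀ x, x ∈ H.V.erase b ↔ Equiv.swap a b x ∈ H.V.erase a := by
    intro x
    rcases eq_or_ne x a with rfl | hxa
    · simp [Equiv.swap_apply_left, Finset.mem_erase, hab, hab.symm, ha, hb]
    rcases eq_or_ne x b with rfl | hxb
    · simp [Equiv.swap_apply_right, Finset.mem_erase, hab, hab.symm, ha, hb]
    · rw [Equiv.swap_apply_of_ne_of_ne hxa hxb]; simp [Finset.mem_erase, hxa, hxb]
  have hIev : ∀ e, e ∈ H.E → ((a, e) ∈ H.I ↔ (b, e) ∈ H.I) := by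
    intro e heE
    constructor <;> intro h
    · have h2 : e ∈ H.Ev b := hEv ▸ mem_Ev.mpr ⟨heE, h⟩
      exact (mem_Ev.mp h2).2
    · have h2 : e ∈ H.Ev a := hEv ▸ mem_Ev.mpr ⟨heE, h⟩
      exact (mem_Ev.mp h2).2
  refine ⟨(Equiv.swap a b).subtypeEquiv hmem, Equiv.refl _, ?_⟩
  rintro ⟨v, hv⟩ ⟨e, he⟩
  have he' : e ∈ H.E := he
  have hvb : v ≠ b := (Finset.mem_erase.mp hv).1
  change ((v, e) ∈ (H.removeNode b).I ↔ (Equiv.swap a b v, e) ∈ (H.removeNode a).I)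
  simp only [HG.removeNode, Finset.mem_filter]
  rcases eq_or_ne v a with rfl | hxa
  · rw [Equiv.swap_apply_left]
    simp only [ne_eq, hab.symm, not_false_iff, and_true, hvb]
    simpa using hIev e he'
  · rw [Equiv.swap_apply_of_ne_of_ne hxa hvb]
    simp [hxa, hvb]

-- ## Local confluence

lemma edge_step_after {H : HG} {e₁ e'₁ e₂ e'₂ : ℕ}
    (he₁ : e₁ ∈ H.E) (he'₁ : e'₁ ∈ H.E) (hne₁ : e₁ ≠ e'₁) (hsub₁ : H.Ve e₁ ⊆ H.Ve e'₁)
    (he₂ : e₂ ∈ H.E) (he'₂ : e'₂ ∈ H.E) (hne₂ : e₂ ≠ e'₂) (hsub₂ : H.Ve e₂ ⊆ H.Ve e'₂)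
    (h12 : e'₁ ≠ e'₂) (hns : ¬(e₂ = e'₁ ∧ e₁ = e'₂)) :
    EdgeStep (H.removeEdge e'₁) ((H.removeEdge e'₁).removeEdge e'₂) := by
  by_cases hc : e₂ = e'₁
  · have h1 : e₁ ≠ e'₂ := fun h => hns ⟨hc, h⟩
    refine ⟨e₁, e'₂, Finset.mem_erase.mpr ⟨hne₁, he₁⟩,
      Finset.mem_erase.mpr ⟨h12.symm, he'₂⟩, h1, ?_, rfl⟩
    rw [Ve_removeEdge hne₁, Ve_removeEdge h12.symm]
    exact hsub₁.trans (hc ▸ hsub₂)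
  · refine ⟨e₂, e'₂, Finset.mem_erase.mpr ⟨hc, he₂⟩,
      Finset.mem_erase.mpr ⟨h12.symm, he'₂⟩, hne₂, ?_, rfl⟩
    rw [Ve_removeEdge hc, Ve_removeEdge h12.symm]
    exact hsub₂

lemma node_step_after {H : HG} {v₁ v'₁ v₂ v'₂ : ℕ}
    (hv₁ : v₁ ∈ H.V) (hv'₁ : v'₁ ∈ H.V) (hne₁ : v₁ ≠ v'₁) (hsub₁ : H.Ev v₁ ⊆ H.Ev v'₁)
    (hv₂ : v₂ ∈ H.V) (hv'₂ : v'₂ ∈ H.V) (hne₂ : v₂ ≠ v'₂) (hsub₂ : H.Ev v₂ ⊆ H.Ev v'₂)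
    (h12 : v₁ ≠ v₂) (hns : ¬(v'₂ = v₁ ∧ v'₁ = v₂)) :
    NodeStep (H.removeNode v₁) ((H.removeNode v₁).removeNode v₂) := by
  by_cases hc : v'₂ = v₁
  · have h1 : v'₁ ≠ v₂ := fun h => hns ⟨hc, h⟩
    refine ⟨v₂, v'₁, Finset.mem_erase.mpr ⟨h12.symm, hv₂⟩,
      Finset.mem_erase.mpr ⟨Ne.symm hne₁, hv'₁⟩, h1.symm, ?_, rfl⟩
    rw [Ev_removeNode h12.symm, Ev_removeNode (Ne.symm hne₁)]
    exact hsub₂.trans (by rw [hc]; exact hsub₁)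
  · refine ⟨v₂, v'₂, Finset.mem_erase.mpr ⟨h12.symm, hv₂⟩,
      Finset.mem_erase.mpr ⟨hc, hv'₂⟩, hne₂, ?_, rfl⟩
    rw [Ev_removeNode h12.symm, Ev_removeNode hc]
    exact hsub₂

lemma local_conf {H A B : HG} (hA : Step H A) (hB : Step H B) :
    ∃ A' B', Relation.ReflTransGen Step A A' ∧ Relation.ReflTransGen Step B B' ∧ Iso A' B' := by
  rcases hA with ⟨e₁, e'₁, he₁, he'₁, hne₁, hsub₁, rfl⟩ | ⟨v₁, v'₁, hv₁, hv'₁, hne₁, hsub₁, rfl⟩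
  · rcases hB with ⟨e₂, e'₂, he₂, he'₂, hne₂, hsub₂, rfl⟩ | ⟨v₂, v'₂, hv₂, hv'₂, hne₂, hsub₂, rfl⟩
    · -- edge / edge
      by_cases h12 : e'₁ = e'₂
      · subst h12
        exact ⟨_, _, .refl, .refl, iso_refl _⟩
      by_cases hswap : e₂ = e'₁ ∧ e₁ = e'₂
      · refine ⟨_, _, .refl, .refl, ?_⟩
        have hVe : H.Ve e'₁ = H.Ve e'₂ :=
          Finset.Subset.antisymm (by rw [← hswap.1]; exact hsub₂) (by rw [← hswap.2]; exact hsub₁)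
        exact swap_edge_iso he'₁ he'₂ h12 hVe
      · refine ⟨_, _,
          Relation.ReflTransGen.single
            (Or.inl (edge_step_after he₁ he'₁ hne₁ hsub₁ he₂ he'₂ hne₂ hsub₂ h12 hswap)),
          Relation.ReflTransGen.single
            (Or.inl (edge_step_after he₂ he'₂ hne₂ hsub₂ he₁ he'₁ hne₁ hsub₁ (Ne.symm h12)
              (fun h => hswap ⟨h.2, h.1⟩))), ?_⟩
        rw [removeEdge_comm]
        exact iso_refl _
    · -- edge / node
      refine ⟨(H.removeEdge e'₁).removeNode v₂, (H.removeNode v₂).removeEdge e'₁,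
        Relation.ReflTransGen.single (Or.inr ?_),
        Relation.ReflTransGen.single (Or.inl ?_), ?_⟩
      · exact ⟨v₂, v'₂, hv₂, hv'₂, hne₂, by
          rw [Ev_removeEdge, Ev_removeEdge]; exact Finset.erase_subset_erase _ hsub₂, rfl⟩
      · exact ⟨e₁, e'₁, he₁, he'₁, hne₁, by
          rw [Ve_removeNode, Ve_removeNode]; exact Finset.erase_subset_erase _ hsub₁, rfl⟩
      · rw [removeEdge_removeNode]
        exact iso_refl _
  · rcases hB with ⟨e₂, e'₂, he₂, he'₂, hne₂, hsub₂, rfl⟩ | ⟨v₂, v'₂, hv₂, hv'₂, hne₂, hsub₂, rfl⟩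
    · -- node / edge
      refine ⟨(H.removeNode v₁).removeEdge e'₂, (H.removeEdge e'₂).removeNode v₁,
        Relation.ReflTransGen.single (Or.inl ?_),
        Relation.ReflTransGen.single (Or.inr ?_), ?_⟩
      · exact ⟨e₂, e'₂, he₂, he'₂, hne₂, by
          rw [Ve_removeNode, Ve_removeNode]; exact Finset.erase_subset_erase _ hsub₂, rfl⟩
      · exact ⟨v₁, v'₁, hv₁, hv'₁, hne₁, by
          rw [Ev_removeEdge, Ev_removeEdge]; exact Finset.erase_subset_erase _ hsub₁, rfl⟩
      · rw [removeEdge_removeNode]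
        exact iso_refl _
    · -- node / node
      by_cases h12 : v₁ = v₂
      · subst h12
        exact ⟨_, _, .refl, .refl, iso_refl _⟩
      by_cases hswap : v'₁ = v₂ ∧ v'₂ = v₁
      · refine ⟨_, _, .refl, .refl, ?_⟩
        have hEv : H.Ev v₁ = H.Ev v₂ :=
          Finset.Subset.antisymm (by rw [← hswap.1]; exact hsub₁) (by rw [← hswap.2]; exact hsub₂)
        exact swap_node_iso hv₁ hv₂ h12 hEv
      · refine ⟨_, _,
          Relation.ReflTransGen.single
            (Or.inr (node_step_after hv₁ hv'₁ hne₁ hsub₁ hv₂ hv'₂ hne₂ hsub₂ h12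
              (fun h => hswap ⟨h.2, h.1⟩))),
          Relation.ReflTransGen.single
            (Or.inr (node_step_after hv₂ hv'₂ hne₂ hsub₂ hv₁ hv'₁ hne₁ hsub₁ (Ne.symm h12)
              hswap)), ?_⟩
        rw [removeNode_comm]
        exact iso_refl _

-- ## Transport of reduction sequences along isomorphism

lemma rtg_iso {H H' K' : HG} (hiso : Iso H H') (h : Relation.ReflTransGen Step H' K') :
    ∃ K, Relation.ReflTransGen Step H K ∧ Iso K K' := by
  induction h with
  | refl => exact ⟨H, .refl, hiso⟩
  | tail _ hstep ih =>
      obtain ⟨M, hM, hMiso⟩ := ih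
      obtain ⟨K, hK, hKiso⟩ := step_iso hMiso hstep
      exact ⟨K, hM.tail hK, hKiso⟩

-- ## Termination measure

def msr (H : HG) : ℕ := H.V.card + H.E.card

lemma step_msr {H K : HG} (h : Step H K) : msr K < msr H := by
  rcases h with ⟨e, e', _, he', _, _, rfl⟩ | ⟨v, v', hv, _, _, _, rfl⟩
  · have h1 : 0 < H.E.card := Finset.card_pos.mpr ⟨e', he'⟩
    have h2 := Finset.card_erase_of_mem he'
    simp only [msr, HG.removeEdge]
    omega
  · have h1 : 0 < H.V.card := Finset.card_pos.mpr ⟨v, hv⟩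
    have h2 := Finset.card_erase_of_mem hv
    simp only [msr, HG.removeNode]
    omega

-- ## Newman-style induction

lemma conf_aux (n : ℕ) : ∀ H H₁ H₂ : HG, msr H ≤ n →
    Relation.ReflTransGen Step H H₁ → Relation.ReflTransGen Step H H₂ →
    ∃ H₃ H₄ : HG, Relation.ReflTransGen Step H₁ H₃ ∧ Relation.ReflTransGen Step H₂ H₄ ∧
      Iso H₃ H₄ := by
  induction n with
  | zero =>
      intro H H₁ H₂ hm h₁ h₂
      rcases h₁.cases_head with rfl | ⟨A, hHA, hA1⟩
      · exact ⟨H₂, H₂, h₂, .refl, iso_refl _⟩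
      · exact absurd (step_msr hHA) (by omega)
  | succ n ih =>
      intro H H₁ H₂ hm h₁ h₂
      rcases h₁.cases_head with rfl | ⟨A, hHA, hA1⟩
      · exact ⟨H₂, H₂, h₂, .refl, iso_refl _⟩
      rcases h₂.cases_head with rfl | ⟨B, hHB, hB2⟩
      · exact ⟨H₁, H₁, .refl, h₁, iso_refl _⟩
      obtain ⟨A', B', hAA', hBB', hiso⟩ := local_conf hHA hHB
      have hmA : msr A ≤ n := by have := step_msr hHA; omega
      have hmB : msr B ≤ n := by have := step_msr hHB; omega
      obtain ⟨C₁, C₂, h1C, hA'C, hC⟩ := ih A H₁ A' hmA hA1 hAA'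
      obtain ⟨D, hB'D, hDC₂⟩ := rtg_iso (iso_symm hiso) hA'C
      obtain ⟨E₁, E₂, hDE, h2E, hE⟩ := ih B D H₂ hmB (hBB'.trans hB'D) hB2
      obtain ⟨F, hC₂F, hFE₁⟩ := rtg_iso (iso_symm hDC₂) hDE
      obtain ⟨G, hC₁G, hGF⟩ := rtg_iso hC hC₂F
      exact ⟨G, E₂, h1C.trans hC₁G, h2E, iso_trans (iso_trans hGF hFE₁) hE⟩


/-- Confluence up to isomorphism. -/
theorem confluence_up_to_iso (H H₁ H₂ : HG)
    (h₁ : Relation.ReflTransGen Step H H₁) (h₂ : Relation.ReflTransGen Step H H₂) :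
    ∃ H₃ H₄ : HG, Relation.ReflTransGen Step H₁ H₃ ∧
      Relation.ReflTransGen Step H₂ H₄ ∧ Iso H₃ H₄ :=
  conf_aux (msr H) H H₁ H₂ le_rfl h₁ h₂
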